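/- With the notation of the previous statement (S = k[t,u,v,x,y], I_n, L_n, and 2 deg r_1 > deg r_0 + deg r_2), one has the containment I_n + (u,v,x,y)^{2n} ⊆ I_n : (r_0^n r_2^n L_n), i.e., r_0^n r_2^n L_n · (u,v,x,y)^{2n} ⊆ I_n. -/
import Mathlib


open MvPolynomial

/-- `prev p j = p (j-1)`, with `prev p 0 = 0`. -/
def prevP {T : Type*} [Zero T] (p : ℕ → T) : ℕ → T
  | 0 => 0
  | j+1 => p j

private lemma lemA {T : Type*} [CommRing T] (ρ₀ ρ₁ ρ₂ : T) (p : ℕ → T) (hp0 : p 0 = 1)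
    (hrec : ∀ j, p (j+1) = ρ₁ * p j - ρ₀ * ρ₂ * prevP p j)
    (A B G : T) (hG : G = ρ₀*A^2 + ρ₁*(A*B) + ρ₂*B^2) :
    ∀ j, ∃ c ε : T, ε * ε = 1 ∧
      ρ₀^j * A^(j+1) = ε * B^j * (p j * A + ρ₂ * prevP p j * B) + c * G := by
  intro j
  induction j with
  | zero =>
    refine ⟨0, 1, by ring, ?_⟩
    simp [hp0, prevP]
  | succ j ih =>
    obtain ⟨c, ε, hε, hc⟩ := ih
    refine ⟨c*ρ₀*A + ε*B^j*(p j), -ε, by linear_combination hε, ?_⟩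
    have hprev : prevP p (j+1) = p j := rfl
    rw [hprev, hrec j]
    linear_combination (ρ₀*A) * hc - (ε*B^j*(p j)) * hG

private lemma pow_mul_mem {T : Type*} [CommRing T] (I : Ideal T) {w : T} {n : ℕ}
    (hw : w^n ∈ I) {g : ℕ} (hg : n ≤ g) (z : T) : z * w^g ∈ I := by
  obtain ⟨m, rfl⟩ := Nat.exists_eq_add_of_le hg
  have h : z * w^(n+m) = (z*w^m) * w^n := by ring
  rw [h]
  exact Ideal.mul_mem_left _ _ hw

private lemma core {T : Type*} [CommRing T] (ρ₀ ρ₁ ρ₂ Λ : T) (p : ℕ → T) (hp0 : p 0 = 1)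
    (hrec : ∀ j, p (j+1) = ρ₁ * p j - ρ₀ * ρ₂ * prevP p j)
    (n : ℕ) (hdvd : ∀ j, 1 ≤ j → j ≤ n - 1 → p j ∣ Λ)
    (I : Ideal T) (w₁ c₁ w₂ c₂ : T) (hw1 : w₁ ^ n ∈ I) (hw2 : w₂ ^ n ∈ I)
    (G : T) (hG : G = ρ₀ * (w₁*c₁)^2 + ρ₁ * ((w₁*c₁)*(w₂*c₂)) + ρ₂ * (w₂*c₂)^2)
    (hGI : G ∈ I)
    (pp qq e f : ℕ) (hsum : 2*pp + 2*qq + e + f = 2*n) (h1 : pp + e < n) (h2 : qq + f < n) :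
    ρ₀^n * ρ₂^n * Λ * ((w₁*c₁)^pp * (w₂*c₂)^qq * w₁^e * w₂^f) ∈ I := by
  rcases lt_trichotomy e f with h | h | h
  · -- f ≥ e + 2 : use lemA on the A-side at level pp-1
    obtain ⟨j, rfl⟩ : ∃ j, pp = j + 1 := ⟨pp-1, by omega⟩
    obtain ⟨c, ε, hε, hc⟩ := lemA ρ₀ ρ₁ ρ₂ p hp0 hrec (w₁*c₁) (w₂*c₂) G hG j
    obtain ⟨κ, rfl⟩ : ∃ κ, n = j + κ := ⟨n - j, by omega⟩
    have key : ρ₀^(j+κ) * ρ₂^(j+κ) * Λ * ((w₁*c₁)^(j+1) * (w₂*c₂)^qq * w₁^e * w₂^f)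
        = (ρ₀^κ*ρ₂^(j+κ)*Λ*ε*(p j)*(w₁*c₁)*w₁^e*c₂^(j+qq)) * w₂^(j+qq+f)
          + (ρ₀^κ*ρ₂^(j+κ)*ρ₂*Λ*ε*(prevP p j)*w₁^e*c₂^(j+qq+1)) * w₂^(j+qq+1+f)
          + (ρ₀^κ*ρ₂^(j+κ)*Λ*(w₂*c₂)^qq*w₁^e*w₂^f*c) * G := by
      linear_combination (ρ₀^κ*ρ₂^(j+κ)*Λ*(w₂*c₂)^qq*w₁^e*w₂^f) * hc
    rw [key]
    exact add_mem (add_mem (pow_mul_mem I hw2 (by omega) _) (pow_mul_mem I hw2 (by omega) _))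
      (Ideal.mul_mem_left _ _ hGI)
  · -- e = f : the balanced case
    subst h
    have hpp : 1 ≤ pp := by omega
    have hqq : 1 ≤ qq := by omega
    obtain ⟨j, rfl⟩ : ∃ j, pp = j + 1 := ⟨pp-1, by omega⟩
    obtain ⟨Λ', hΛ⟩ := hdvd (j+qq) (by omega) (by omega)
    obtain ⟨c₁', ε₁, hε₁, hc1⟩ := lemA ρ₀ ρ₁ ρ₂ p hp0 hrec (w₁*c₁) (w₂*c₂) G hG j
    obtain ⟨c₂', ε₂, hε₂, hc2⟩ := lemA ρ₀ ρ₁ ρ₂ p hp0 hrec (w₁*c₁) (w₂*c₂) G hG (j+qq)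
    obtain ⟨κ, rfl⟩ : ∃ κ, n = j + κ := ⟨n - j, by omega⟩
    have hκ : κ = qq + e + 1 := by omega
    subst hκ
    rw [hΛ]
    have key : ρ₀^(j+(qq+e+1)) * ρ₂^(j+(qq+e+1)) * (p (j+qq) * Λ') *
          ((w₁*c₁)^(j+1) * (w₂*c₂)^qq * w₁^e * w₂^e)
        = (ρ₀^(qq+e+1)*ρ₀^(j+qq)*ρ₂^(j+(qq+e+1))*Λ'*w₂^e*ε₁*ε₂*(p j)*c₁^(j+qq+1)) * w₁^(j+qq+1+e)
          + (ρ₀^(qq+e+1)*ρ₂^(j+(qq+e+1))*Λ'*w₁^e*ε₁*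
              ((p (j+qq))*(ρ₂*prevP p j) - (p j)*(ρ₂*prevP p (j+qq)))*c₂^(j+qq+1)) * w₂^(j+qq+1+e)
          + (ρ₀^(qq+e+1)*ρ₂^(j+(qq+e+1))*Λ'*w₁^e*w₂^e*
              ((p (j+qq))*(w₂*c₂)^qq*c₁' - ε₁*(p j)*ε₂*c₂')) * G := by
      linear_combination
        (ρ₀^(qq+e+1)*ρ₂^(j+(qq+e+1))*(p (j+qq))*Λ'*(w₂*c₂)^qq*w₁^e*w₂^e) * hc1
        - (ρ₀^(qq+e+1)*ρ₂^(j+(qq+e+1))*Λ'*w₁^e*w₂^e*ε₁*(p j)*ε₂) * hc2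
        - (ρ₀^(qq+e+1)*ρ₂^(j+(qq+e+1))*Λ'*w₁^e*w₂^e*ε₁*(p j)*
            ((p (j+qq))*(w₁*c₁)*(w₂*c₂)^(j+qq) + ρ₂*(prevP p (j+qq))*(w₂*c₂)^(j+qq+1))) * hε₂
    rw [key]
    exact add_mem (add_mem (pow_mul_mem I hw1 (by omega) _) (pow_mul_mem I hw2 (by omega) _))
      (Ideal.mul_mem_left _ _ hGI)
  · -- e ≥ f + 2 : symmetric, use lemA on the B-side at level qq-1
    have hrec2 : ∀ j, p (j+1) = ρ₁ * p j - ρ₂ * ρ₀ * prevP p j := by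
      intro j; rw [hrec j]; ring
    have hG2 : G = ρ₂ * (w₂*c₂)^2 + ρ₁ * ((w₂*c₂)*(w₁*c₁)) + ρ₀ * (w₁*c₁)^2 := by
      rw [hG]; ring
    obtain ⟨j, rfl⟩ : ∃ j, qq = j + 1 := ⟨qq-1, by omega⟩
    obtain ⟨c, ε, hε, hc⟩ := lemA ρ₂ ρ₁ ρ₀ p hp0 hrec2 (w₂*c₂) (w₁*c₁) G hG2 j
    obtain ⟨κ, rfl⟩ : ∃ κ, n = j + κ := ⟨n - j, by omega⟩
    have key : ρ₀^(j+κ) * ρ₂^(j+κ) * Λ * ((w₁*c₁)^pp * (w₂*c₂)^(j+1) * w₁^e * w₂^f)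
        = (ρ₂^κ*ρ₀^(j+κ)*Λ*ε*(p j)*(w₂*c₂)*w₂^f*c₁^(j+pp)) * w₁^(j+pp+e)
          + (ρ₂^κ*ρ₀^(j+κ)*ρ₀*Λ*ε*(prevP p j)*w₂^f*c₁^(j+pp+1)) * w₁^(j+pp+1+e)
          + (ρ₂^κ*ρ₀^(j+κ)*Λ*(w₁*c₁)^pp*w₂^f*w₁^e*c) * G := by
      linear_combination (ρ₂^κ*ρ₀^(j+κ)*Λ*(w₁*c₁)^pp*w₂^f*w₁^e) * hc
    rw [key]
    exact add_mem (add_mem (pow_mul_mem I hw1 (by omega) _) (pow_mul_mem I hw1 (by omega) _))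
      (Ideal.mul_mem_left _ _ hGI)

private lemma span_pow_le {R : Type*} [CommRing R] (a b c d : R) (m : ℕ) :
    Ideal.span {a, b, c, d} ^ m ≤
      Ideal.span {g : R | ∃ i j k l : ℕ, i+j+k+l = m ∧ g = a^i*b^j*c^k*d^l} := by
  induction m with
  | zero =>
    rw [pow_zero, Ideal.one_eq_top]
    have h1 : (1 : R) ∈ Ideal.span {g : R | ∃ i j k l : ℕ, i+j+k+l = 0 ∧ g = a^i*b^j*c^k*d^l} :=
      Ideal.subset_span ⟨0, 0, 0, 0, by norm_num, by ring⟩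
    rw [← Ideal.eq_top_iff_one] at h1
    rw [h1]
  | succ m ih =>
    rw [pow_succ]
    calc Ideal.span {a,b,c,d} ^ m * Ideal.span {a,b,c,d}
        ≤ Ideal.span {g : R | ∃ i j k l : ℕ, i+j+k+l = m ∧ g = a^i*b^j*c^k*d^l} *
            Ideal.span {a,b,c,d} := Ideal.mul_mono_left ih
      _ ≤ _ := by
          rw [Ideal.span_mul_span']
          refine Ideal.span_le.2 ?_
          rintro z ⟨x, hx, y, hy, rfl⟩
          obtain ⟨i, j, k, l, hs, rfl⟩ := hx
          simp only [Set.mem_insert_iff, Set.mem_singleton_iff] at hy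
          rcases hy with rfl | rfl | rfl | rfl
          · exact Ideal.subset_span ⟨i+1, j, k, l, by omega, by ring⟩
          · exact Ideal.subset_span ⟨i, j+1, k, l, by omega, by ring⟩
          · exact Ideal.subset_span ⟨i, j, k+1, l, by omega, by ring⟩
          · exact Ideal.subset_span ⟨i, j, k, l+1, by omega, by ring⟩

private lemma mono_mem {T : Type*} [CommRing T] (ρ₀ ρ₁ ρ₂ Λ : T) (p : ℕ → T) (hp0 : p 0 = 1)
    (hrec : ∀ j, p (j+1) = ρ₁ * p j - ρ₀ * ρ₂ * prevP p j)
    (n : ℕ) (hdvd : ∀ j, 1 ≤ j → j ≤ n - 1 → p j ∣ Λ)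
    (I : Ideal T) (u v x y : T)
    (hu : u^n ∈ I) (hv : v^n ∈ I) (hx : x^n ∈ I) (hy : y^n ∈ I)
    (G : T) (hG : G = ρ₀*u^2*x^2 + ρ₁*u*x*v*y + ρ₂*v^2*y^2) (hGI : G ∈ I)
    (i j k l : ℕ) (hsum : i + j + k + l = 2*n) :
    ρ₀^n * ρ₂^n * Λ * (u^i*v^j*x^k*y^l) ∈ I := by
  by_cases hin : n ≤ i
  · have h : ρ₀^n * ρ₂^n * Λ * (u^i*v^j*x^k*y^l)
        = (ρ₀^n * ρ₂^n * Λ * (v^j*x^k*y^l)) * u^i := by ring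
    rw [h]; exact pow_mul_mem I hu hin _
  by_cases hjn : n ≤ j
  · have h : ρ₀^n * ρ₂^n * Λ * (u^i*v^j*x^k*y^l)
        = (ρ₀^n * ρ₂^n * Λ * (u^i*x^k*y^l)) * v^j := by ring
    rw [h]; exact pow_mul_mem I hv hjn _
  by_cases hkn : n ≤ k
  · have h : ρ₀^n * ρ₂^n * Λ * (u^i*v^j*x^k*y^l)
        = (ρ₀^n * ρ₂^n * Λ * (u^i*v^j*y^l)) * x^k := by ring
    rw [h]; exact pow_mul_mem I hx hkn _
  by_cases hln : n ≤ l
  · have h : ρ₀^n * ρ₂^n * Λ * (u^i*v^j*x^k*y^l)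
        = (ρ₀^n * ρ₂^n * Λ * (u^i*v^j*x^k)) * y^l := by ring
    rw [h]; exact pow_mul_mem I hy hln _
  push_neg at hin hjn hkn hln
  rcases le_total k i with hki | hik
  · obtain ⟨e, rfl⟩ : ∃ e, i = k + e := ⟨i - k, by omega⟩
    rcases le_total l j with hlj | hjl
    · obtain ⟨f, rfl⟩ : ∃ f, j = l + f := ⟨j - l, by omega⟩
      have h : ρ₀^n * ρ₂^n * Λ * (u^(k+e)*v^(l+f)*x^k*y^l)
          = ρ₀^n * ρ₂^n * Λ * ((u*x)^k * (v*y)^l * u^e * v^f) := by ring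
      rw [h]
      exact core ρ₀ ρ₁ ρ₂ Λ p hp0 hrec n hdvd I u x v y hu hv G (by rw [hG]; ring) hGI
        k l e f (by omega) (by omega) (by omega)
    · obtain ⟨f, rfl⟩ : ∃ f, l = j + f := ⟨l - j, by omega⟩
      have h : ρ₀^n * ρ₂^n * Λ * (u^(k+e)*v^j*x^k*y^(j+f))
          = ρ₀^n * ρ₂^n * Λ * ((u*x)^k * (y*v)^j * u^e * y^f) := by ring
      rw [h]
      exact core ρ₀ ρ₁ ρ₂ Λ p hp0 hrec n hdvd I u x y v hu hy G (by rw [hG]; ring) hGI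
        k j e f (by omega) (by omega) (by omega)
  · obtain ⟨e, rfl⟩ : ∃ e, k = i + e := ⟨k - i, by omega⟩
    rcases le_total l j with hlj | hjl
    · obtain ⟨f, rfl⟩ : ∃ f, j = l + f := ⟨j - l, by omega⟩
      have h : ρ₀^n * ρ₂^n * Λ * (u^i*v^(l+f)*x^(i+e)*y^l)
          = ρ₀^n * ρ₂^n * Λ * ((x*u)^i * (v*y)^l * x^e * v^f) := by ring
      rw [h]
      exact core ρ₀ ρ₁ ρ₂ Λ p hp0 hrec n hdvd I x u v y hx hv G (by rw [hG]; ring) hGI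
        i l e f (by omega) (by omega) (by omega)
    · obtain ⟨f, rfl⟩ : ∃ f, l = j + f := ⟨l - j, by omega⟩
      have h : ρ₀^n * ρ₂^n * Λ * (u^i*v^j*x^(i+e)*y^(j+f))
          = ρ₀^n * ρ₂^n * Λ * ((x*u)^i * (y*v)^j * x^e * y^f) := by ring
      rw [h]
      exact core ρ₀ ρ₁ ρ₂ Λ p hp0 hrec n hdvd I x u y v hx hy G (by rw [hG]; ring) hGI
        i j e f (by omega) (by omega) (by omega)

/-- With the notation of Statement 10 (`S = k[t,u,v,x,y]`, `t = X 0`, `u = X 1`,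
`v = X 2`, `x = X 3`, `y = X 4`, `2 deg r₁ > deg r₀ + deg r₂`, `L = lcm(P_1, …, P_{n-1})`),
one has `r₀^n r₂^n L · (u,v,x,y)^{2n} ⊆ I_n`. -/
theorem stmt11 {k : Type*} [Field k] (r₀ r₁ r₂ : Polynomial k)
    (hdeg : r₀.degree + r₂.degree < r₁.degree + r₁.degree)
    (P : ℕ → Polynomial k) (hP0 : P 0 = 1) (hP1 : P 1 = r₁)
    (hPrec : ∀ j : ℕ, 1 ≤ j → P (j + 1) = r₁ * P j - r₀ * r₂ * P (j - 1))
    (n : ℕ) (L : Polynomial k)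
    (hLdvd : ∀ j ∈ Finset.Icc 1 (n - 1), P j ∣ L)
    (hLmin : ∀ M : Polynomial k, (∀ j ∈ Finset.Icc 1 (n - 1), P j ∣ M) → L ∣ M) :
    ∀ f ∈ (Ideal.span {(X 1 : MvPolynomial (Fin 5) k), X 2, X 3, X 4}) ^ (2 * n),
      Polynomial.aeval (X 0 : MvPolynomial (Fin 5) k) (r₀ ^ n * r₂ ^ n * L) * f ∈
        Ideal.span {(X 1 : MvPolynomial (Fin 5) k) ^ n, (X 2) ^ n, (X 3) ^ n, (X 4) ^ n,
          Polynomial.aeval (X 0 : MvPolynomial (Fin 5) k) r₀ * (X 1) ^ 2 * (X 3) ^ 2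
            + Polynomial.aeval (X 0 : MvPolynomial (Fin 5) k) r₁ * (X 1) * (X 3) * (X 2) * (X 4)
            + Polynomial.aeval (X 0 : MvPolynomial (Fin 5) k) r₂ * (X 2) ^ 2 * (X 4) ^ 2} := by
  intro f hf
  set T := MvPolynomial (Fin 5) k
  set φ : Polynomial k →ₐ[k] T := Polynomial.aeval (X 0 : T) with hφ
  set I : Ideal T := Ideal.span {(X 1 : T) ^ n, (X 2) ^ n, (X 3) ^ n, (X 4) ^ n,
      φ r₀ * (X 1) ^ 2 * (X 3) ^ 2 + φ r₁ * (X 1) * (X 3) * (X 2) * (X 4)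
        + φ r₂ * (X 2) ^ 2 * (X 4) ^ 2} with hI
  have hf' := span_pow_le (X 1 : T) (X 2) (X 3) (X 4) (2*n) hf
  have main : ∀ g ∈ {g : T | ∃ i j kk l : ℕ, i+j+kk+l = 2*n ∧
      g = (X 1)^i*(X 2)^j*(X 3)^kk*(X 4)^l}, φ (r₀ ^ n * r₂ ^ n * L) * g ∈ I := by
    rintro g ⟨i, j, kk, l, hsum, rfl⟩
    have hmap : φ (r₀ ^ n * r₂ ^ n * L) = (φ r₀)^n * (φ r₂)^n * φ L := by
      rw [map_mul, map_mul, map_pow, map_pow]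
    rw [hmap]
    refine mono_mem (φ r₀) (φ r₁) (φ r₂) (φ L) (fun j => φ (P j)) ?_ ?_ n ?_ I
      (X 1) (X 2) (X 3) (X 4) ?_ ?_ ?_ ?_ _ rfl ?_ i j kk l hsum
    · show φ (P 0) = 1
      rw [hP0, map_one]
    · intro j
      cases j with
      | zero =>
        show φ (P 1) = φ r₁ * φ (P 0) - φ r₀ * φ r₂ * 0
        rw [hP1, hP0, map_one]; ring
      | succ m =>
        show φ (P (m+2)) = φ r₁ * φ (P (m+1)) - φ r₀ * φ r₂ * φ (P m)
        have h := hPrec (m+1) (by omega)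
        simp only [Nat.add_sub_cancel] at h
        rw [h, map_sub, map_mul, map_mul, map_mul]
    · intro j hj1 hj2
      exact map_dvd φ (hLdvd j (Finset.mem_Icc.mpr ⟨hj1, hj2⟩))
    · exact Ideal.subset_span (Set.mem_insert _ _)
    · exact Ideal.subset_span (Set.mem_insert_iff.mpr (Or.inr (Set.mem_insert _ _)))
    · exact Ideal.subset_span
        (Set.mem_insert_iff.mpr (Or.inr (Set.mem_insert_iff.mpr (Or.inr (Set.mem_insert _ _)))))
    · exact Ideal.subset_span (Set.mem_insert_iff.mpr (Or.inr (Set.mem_insert_iff.mpr (Or.inr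
        (Set.mem_insert_iff.mpr (Or.inr (Set.mem_insert _ _)))))))
    · exact Ideal.subset_span (Set.mem_insert_iff.mpr (Or.inr (Set.mem_insert_iff.mpr (Or.inr
        (Set.mem_insert_iff.mpr (Or.inr (Set.mem_insert_iff.mpr (Or.inr
        (Set.mem_singleton_iff.mpr rfl)))))))))
  refine Submodule.span_induction main ?_ ?_ ?_ hf'
  · simp
  · intro a b _ _ ha hb
    rw [mul_add]; exact add_mem ha hb
  · intro a b _ hb
    rw [smul_eq_mul, mul_left_comm]
    exact Ideal.mul_mem_left _ _ hb
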